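/- For integers n ≥ 4 and k ≥ 2 with n ≥ (2k−1+√(8k+1))/2, there exist k+1 subsets S'_1,...,S'_{k+1} of [n] each of cardinality k, and k subsets S_1,...,S_k of [n] each of cardinality k+1, such that for every element i ∈ [n], the number of sets S'_j containing i equals the number of sets S_j containing i. -/

import Mathlib

open Finset
open Fin.NatCast Fin.CommRing

/-- cyclic interval of length `L` starting at `j` inside `Fin n` -/
def cintv (n L j : ℕ) [NeZero n] : Finset (Fin n) :=
  (Finset.range L).image (fun r => ((j + r : ℕ) : Fin n))

section helpers
variable {n : ℕ} [NeZero n]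

lemma mem_cintv {L j : ℕ} {i : Fin n} :
    i ∈ cintv n L j ↔ ∃ r < L, ((j + r : ℕ) : Fin n) = i := by
  simp [cintv]

lemma castnat_inj {a b : ℕ} (ha : a < n) (hb : b < n)
    (h : (a : Fin n) = (b : Fin n)) : a = b := by
  have := congrArg Fin.val h
  simpa [Fin.val_natCast, Nat.mod_eq_of_lt ha, Nat.mod_eq_of_lt hb] using this

lemma card_cintv {L j : ℕ} (hL : L ≤ n) : (cintv n L j).card = L := by
  rw [cintv, Finset.card_image_of_injOn, Finset.card_range]
  intro r1 h1 r2 h2 h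
  simp only [Finset.coe_range, Set.mem_Iio] at h1 h2
  have := congrArg Fin.val h
  simp only [Fin.val_natCast] at this
  have h' : r1 % n = r2 % n := Nat.ModEq.add_left_cancel' j this
  rwa [Nat.mod_eq_of_lt (lt_of_lt_of_le h1 hL), Nat.mod_eq_of_lt (lt_of_lt_of_le h2 hL)] at h'

lemma start_mem {L j : ℕ} (hL : 0 < L) : (j : Fin n) ∈ cintv n L j := by
  rw [mem_cintv]; exact ⟨0, hL, by simp⟩

lemma pred_start_not_mem {L j : ℕ} (hLn : L < n) : ((j : Fin n) - 1) ∉ cintv n L j := by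
  rw [mem_cintv]
  rintro ⟨r, hr, h⟩
  have h2 : ((r : Fin n) + 1) = 0 := by
    have h' : (j : Fin n) + (r : Fin n) = (j : Fin n) - 1 := by push_cast at h; exact h
    linear_combination h'
  have h3 : (((r + 1 : ℕ)) : Fin n) = ((0 : ℕ) : Fin n) := by push_cast; simpa using h2
  have := castnat_inj (by omega) (by omega) h3
  omega

lemma start_eq {L j : ℕ} (_hLn : L < n) {x : Fin n}
    (hx : x ∈ cintv n L j) (hx' : x - 1 ∉ cintv n L j) : x = (j : Fin n) := by
  rw [mem_cintv] at hx
  obtain ⟨r, hr, h⟩ := hx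
  rcases Nat.eq_zero_or_pos r with h0 | h0
  · subst h0; simpa using h.symm
  · exfalso
    apply hx'
    rw [mem_cintv]
    refine ⟨r - 1, by omega, ?_⟩
    rw [← h]
    have : ((j + r : ℕ) : Fin n) = ((j + (r - 1) : ℕ) : Fin n) + 1 := by
      have : j + r = (j + (r-1)) + 1 := by omega
      rw [this]; push_cast; ring
    rw [this]; ring

lemma cintv_inj {L a b : ℕ} (hL : 0 < L) (hLn : L < n) (ha : a < n) (hb : b < n)
    (h : cintv n L a = cintv n L b) : a = b := by
  have h1 : (a : Fin n) ∈ cintv n L b := h ▸ start_mem hL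
  have h2 : ((a : Fin n) - 1) ∉ cintv n L b := h ▸ pred_start_not_mem hLn
  exact castnat_inj ha hb (start_eq hLn h1 h2)

lemma count_cintv {m L : ℕ} (hL : L ≤ n) (i : Fin n) :
    (Finset.univ.filter fun j : Fin m => i ∈ cintv n L j.val).card
      = (((Finset.range m) ×ˢ (Finset.range L)).filter
          fun p => ((p.1 : Fin n) + (p.2 : Fin n) = i)).card := by
  symm
  apply Finset.card_bij (fun p _ => (⟨p.1, by
      have := (Finset.mem_filter.1 ‹_›).1
      simp only [Finset.mem_product, Finset.mem_range] at this
      exact this.1⟩ : Fin m))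
  · intro p hp
    simp only [Finset.mem_filter, Finset.mem_product, Finset.mem_range] at hp
    simp only [Finset.mem_filter, Finset.mem_univ, true_and]
    rw [mem_cintv]
    exact ⟨p.2, hp.1.2, by push_cast; exact hp.2⟩
  · intro p hp q hq hpq
    simp only [Finset.mem_filter, Finset.mem_product, Finset.mem_range] at hp hq
    have h1 : p.1 = q.1 := congrArg Fin.val hpq
    have h2 : (p.2 : Fin n) = (q.2 : Fin n) := by
      have := hp.2.trans hq.2.symm
      rw [h1] at this
      exact add_left_cancel this
    have := castnat_inj (lt_of_lt_of_le hp.1.2 hL) (lt_of_lt_of_le hq.1.2 hL) h2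
    exact Prod.ext h1 this
  · intro j hj
    simp only [Finset.mem_filter, Finset.mem_univ, true_and] at hj
    rw [mem_cintv] at hj
    obtain ⟨r, hr, h⟩ := hj
    refine ⟨(j.val, r), ?_, rfl⟩
    simp only [Finset.mem_filter, Finset.mem_product, Finset.mem_range]
    exact ⟨⟨j.isLt, hr⟩, by push_cast at h; exact h⟩

lemma count_swap {m L : ℕ} (i : Fin n) :
    (((Finset.range m) ×ˢ (Finset.range L)).filter
        fun p => ((p.1 : Fin n) + (p.2 : Fin n) = i)).card
      = (((Finset.range L) ×ˢ (Finset.range m)).filter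
        fun p => ((p.1 : Fin n) + (p.2 : Fin n) = i)).card := by
  apply Finset.card_bij (fun p _ => p.swap)
  · intro p hp
    simp only [Finset.mem_filter, Finset.mem_product, Finset.mem_range] at hp ⊢
    exact ⟨⟨hp.1.2, hp.1.1⟩, by rw [add_comm]; exact hp.2⟩
  · intro p _ q _ h
    exact Prod.swap_injective h
  · intro p hp
    refine ⟨p.swap, ?_, by simp⟩
    simp only [Finset.mem_filter, Finset.mem_product, Finset.mem_range] at hp ⊢
    exact ⟨⟨hp.1.2, hp.1.1⟩, by rw [add_comm]; exact hp.2⟩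

end helpers

theorem exists_families_same_cardinality_support (n k : ℕ) (hn : 4 ≤ n) (hk : 2 ≤ k)
    (hnk : ((2 * k : ℝ) - 1 + Real.sqrt (8 * k + 1)) / 2 ≤ n) :
    ∃ (S' : Fin (k + 1) → Finset (Fin n)) (S : Fin k → Finset (Fin n)),
      Function.Injective S' ∧ Function.Injective S ∧
      (∀ j, (S' j).card = k) ∧ (∀ j, (S j).card = k + 1) ∧
      ∀ i : Fin n,
        (Finset.univ.filter fun j => i ∈ S' j).card =
          (Finset.univ.filter fun j => i ∈ S j).card := by
  haveI : NeZero n := ⟨by omega⟩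
  -- derive k + 2 ≤ n
  have hsq : (4 : ℝ) < Real.sqrt (8 * k + 1) := by
    have h17 : (17 : ℝ) ≤ 8 * k + 1 := by
      have : (2 : ℝ) ≤ k := by exact_mod_cast hk
      linarith
    have : Real.sqrt 17 ≤ Real.sqrt (8 * k + 1) := Real.sqrt_le_sqrt h17
    have h4 : (4 : ℝ) < Real.sqrt 17 := by
      rw [show (4:ℝ) = Real.sqrt 16 by
        rw [show (16:ℝ) = 4^2 by norm_num, Real.sqrt_sq (by norm_num)]]
      exact Real.sqrt_lt_sqrt (by norm_num) (by norm_num)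
    linarith
  have hkn : k + 2 ≤ n := by
    by_contra hc
    push_neg at hc
    have : (n : ℝ) ≤ k + 1 := by
      have : n ≤ k + 1 := by omega
      exact_mod_cast this
    linarith
  refine ⟨fun j => cintv n k j.val, fun j => cintv n (k+1) j.val, ?_, ?_, ?_, ?_, ?_⟩
  · intro j1 j2 h
    exact Fin.ext (cintv_inj (by omega) (by omega)
      (lt_of_lt_of_le j1.isLt (by omega)) (lt_of_lt_of_le j2.isLt (by omega)) h)
  · intro j1 j2 h
    exact Fin.ext (cintv_inj (by omega) (by omega)
      (lt_of_lt_of_le j1.isLt (by omega)) (lt_of_lt_of_le j2.isLt (by omega)) h)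
  · intro j; exact card_cintv (by omega)
  · intro j; exact card_cintv (by omega)
  · intro i
    rw [count_cintv (by omega) i, count_cintv (by omega) i, count_swap]
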